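/- Let A ∈ ℝ^{n×d} have full column rank, b ∈ ℝ^n, and f(x) = ‖Ax − b‖₁. Let R ∈ ℝ^{d×d} be invertible with U = AR⁻¹ an (α,β,1)-conditioned matrix, let 0 ≤ γ < 1 and λ_1,…,λ_n satisfy (1−γ)‖U_i‖₁ ≤ λ_i ≤ (1+γ)‖U_i‖₁ with Σ_j λ_j > 0, and set p_i = λ_i/Σ_j λ_j. Let F ∈ ℝ^{d×d} be invertible, H = (FFᵀ)⁻¹, let Z ⊆ ℝ^d be nonempty, closed and convex, x₀ ∈ Z, η > 0, and let ξ₀,…,ξ_{T} be i.i.d. indices drawn from (p_i). Define the recursion x_{t+1} = argmin_{x∈Z}[ η c_t A_{ξ_t} x + ½‖x_t − x‖_H² ] with c_t = sgn(A_{ξ_t}x_t − b_{ξ_t})/p_{ξ_t}, and let x̄ = (1/(T+1)) Σ_{t=0}^{T} x_t. Then for any minimizer x* of f over Z, E[f(x̄)] − f(x*) ≤ ‖x* − x₀‖_H²/(2η(T+1)) + (η/2)·(c₁ α |RF|₁)², where c₁ = (1+γ)/(1−γ), the expectation is over the random indices, |M|₁ = Σ_{i,j}|M_{ij}|, and ‖v‖_H²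 = vᵀHv. -/

import Mathlib

open Matrix Finset

/-- The `ℓ₁` norm of a vector. -/
noncomputable def l1Norm {m : ℕ} (v : Fin m → ℝ) : ℝ := ∑ i, |v i|

/-- The `ℓ_∞` norm of a vector. -/
noncomputable def linfNorm {m : ℕ} (v : Fin m → ℝ) : ℝ := ⨆ i, |v i|

/-- The entrywise `ℓ₁` norm of a matrix: `|M|₁ = ∑ i j, |M i j|`. -/
noncomputable def entry1Norm {m k : ℕ} (M : Matrix (Fin m) (Fin k) ℝ) : ℝ :=
  ∑ i, ∑ j, |M i j|

/-- `U` is `(α, β, 1)`-conditioned: `|U|₁ ≤ α` and `‖x‖_∞ ≤ β ‖U x‖₁` for all `x`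
(the constant `β` being nonnegative). -/
def IsConditioned1 {m k : ℕ} (α β : ℝ) (U : Matrix (Fin m) (Fin k) ℝ) : Prop :=
  0 ≤ β ∧ entry1Norm U ≤ α ∧ ∀ x : Fin k → ℝ, linfNorm x ≤ β * l1Norm (U *ᵥ x)

/-- The squared ellipsoidal norm `‖v‖_H² = vᵀ H v`. -/
noncomputable def normHsq {k : ℕ} (H : Matrix (Fin k) (Fin k) ℝ) (v : Fin k → ℝ) : ℝ :=
  v ⬝ᵥ (H *ᵥ v)

lemma vi_limit (L M : ℝ) (hM : 0 ≤ M)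
    (h : ∀ m : ℝ, 0 < m → m ≤ 1 → 0 ≤ m * L + m ^ 2 * M) : 0 ≤ L := by
  by_contra hL
  push_neg at hL
  set m := min 1 (-L / (2 * M + 1)) with hm
  have h2M : (0:ℝ) < 2 * M + 1 := by linarith
  have hm0 : 0 < m := lt_min one_pos (div_pos (neg_pos.2 hL) h2M)
  have hm1 : m ≤ 1 := min_le_left _ _
  have hm2 : m ≤ -L / (2 * M + 1) := min_le_right _ _
  have h3 : m * (2 * M + 1) ≤ -L := (le_div_iff₀ h2M).mp hm2
  have h4 := h m hm0 hm1
  nlinarith [mul_le_mul_of_nonneg_left h3 hm0.le, mul_pos hm0 hm0]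

lemma sq_sum_le_sum_abs_sq {k : ℕ} (v : Fin k → ℝ) :
    ∑ i, (v i) ^ 2 ≤ (∑ i, |v i|) ^ 2 := by
  have h : ∀ i ∈ (univ : Finset (Fin k)), (v i) ^ 2 ≤ |v i| * ∑ j, |v j| := by
    intro i _
    have : |v i| ≤ ∑ j, |v j| :=
      Finset.single_le_sum (fun j _ => abs_nonneg (v j)) (mem_univ i)
    calc (v i) ^ 2 = |v i| * |v i| := by rw [← sq_abs]; ring
    _ ≤ |v i| * ∑ j, |v j| := mul_le_mul_of_nonneg_left this (abs_nonneg _)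
  calc ∑ i, (v i) ^ 2 ≤ ∑ i, |v i| * ∑ j, |v j| := Finset.sum_le_sum h
  _ = (∑ i, |v i|) ^ 2 := by rw [← Finset.sum_mul]; ring

lemma cond_bound {N M : ℕ} (i0 : Fin N) (p : Fin N → ℝ) (hp : ∀ i, 0 ≤ p i)
    (hp1 : ∑ i, p i = 1)
    (t : Fin M) {σ : Type} (y : (Fin M → Fin N) → σ)
    (hy : ∀ ξ (i : Fin N), y (Function.update ξ t i) = y ξ)
    (G : Fin N → σ → ℝ) (φ : σ → ℝ)
    (hpt : ∀ ξ : Fin M → Fin N, φ (y ξ) ≤ ∑ i, p i * G i (y ξ)) :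
    ∑ ξ : Fin M → Fin N, (∏ s, p (ξ s)) * φ (y ξ)
      ≤ ∑ ξ : Fin M → Fin N, (∏ s, p (ξ s)) * G (ξ t) (y ξ) := by
  classical
  set e := Equiv.funSplitAt t (Fin N) with he
  have hsymm_t : ∀ (i : Fin N) g, (e.symm (i, g)) t = i := by
    intro i g; simp [he, Equiv.funSplitAt_symm_apply]
  have hsymm_ne : ∀ (i : Fin N) g s (hs : s ≠ t), e.symm (i, g) s = g ⟨s, hs⟩ := by
    intro i g s hs; simp [he, Equiv.funSplitAt_symm_apply, hs]
  have hupd : ∀ (i i' : Fin N) g, e.symm (i, g) = Function.update (e.symm (i', g)) t i := by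
    intro i i' g; funext s
    by_cases hs : s = t
    · subst hs; rw [hsymm_t, Function.update_self]
    · rw [hsymm_ne i _ s hs, Function.update_of_ne hs, hsymm_ne i' _ s hs]
  have hyconst : ∀ (i : Fin N) g, y (e.symm (i, g)) = y (e.symm (i0, g)) := by
    intro i g; rw [hupd i i0 g, hy]
  have hW : ∀ (i : Fin N) g, (∏ s, p (e.symm (i, g) s)) = p i * ∏ j : {j // j ≠ t}, p (g j) := by
    intro i g
    rw [← Finset.mul_prod_erase univ _ (mem_univ t), hsymm_t]
    congr 1
    rw [Finset.prod_subtype (p := fun s => s ≠ t) (univ.erase t)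
      (fun s => by simp [Finset.mem_erase]) (fun s => p (e.symm (i, g) s))]
    exact Finset.prod_congr rfl fun j _ => by rw [hsymm_ne i g j.1 j.2]
  have transfer : ∀ (Φ : Fin N → σ → ℝ),
      ∑ ξ : Fin M → Fin N, (∏ s, p (ξ s)) * Φ (ξ t) (y ξ)
        = ∑ g : {j // j ≠ t} → Fin N, (∏ j, p (g j)) *
            ∑ i, p i * Φ i (y (e.symm (i0, g))) := by
    intro Φ
    rw [← Equiv.sum_comp e.symm (fun ξ => (∏ s, p (ξ s)) * Φ (ξ t) (y ξ))]
    rw [Fintype.sum_prod_type]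
    rw [Finset.sum_comm]
    refine Finset.sum_congr rfl fun g _ => ?_
    rw [Finset.mul_sum]
    refine Finset.sum_congr rfl fun i _ => ?_
    rw [hW, hsymm_t, hyconst]
    ring
  have lhs_eq : ∑ ξ : Fin M → Fin N, (∏ s, p (ξ s)) * φ (y ξ)
      = ∑ g : {j // j ≠ t} → Fin N, (∏ j, p (g j)) * φ (y (e.symm (i0, g))) := by
    have := transfer (fun _ z => φ z)
    rw [this]
    refine Finset.sum_congr rfl fun g _ => ?_
    rw [← Finset.sum_mul, hp1, one_mul]
  rw [lhs_eq, transfer G]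
  refine Finset.sum_le_sum fun g _ => ?_
  have hWnn : (0:ℝ) ≤ ∏ j : {j // j ≠ t}, p (g j) := Finset.prod_nonneg fun j _ => hp _
  refine mul_le_mul_of_nonneg_left ?_ hWnn
  exact hpt (e.symm (i0, g))

set_option maxHeartbeats 2000000 in
theorem pwSGD_l1_expected_error_bound
    (n d T : ℕ)
    (A : Matrix (Fin n) (Fin d) ℝ) (hrank : A.rank = d) (b : Fin n → ℝ)
    (f : (Fin d → ℝ) → ℝ) (hf : f = fun x => l1Norm (A *ᵥ x - b))
    (R : Matrix (Fin d) (Fin d) ℝ) (hR : IsUnit R)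
    (α β : ℝ) (hcond : IsConditioned1 α β (A * R⁻¹))
    (γ : ℝ) (hγ0 : 0 ≤ γ) (hγ1 : γ < 1)
    (lam : Fin n → ℝ)
    (hlam : ∀ i, (1 - γ) * l1Norm ((A * R⁻¹) i) ≤ lam i ∧
                 lam i ≤ (1 + γ) * l1Norm ((A * R⁻¹) i))
    (hlamsum : 0 < ∑ j, lam j)
    (prob : Fin n → ℝ) (hprob : ∀ i, prob i = lam i / ∑ j, lam j)
    (F : Matrix (Fin d) (Fin d) ℝ) (hF : IsUnit F)
    (H : Matrix (Fin d) (Fin d) ℝ) (hH : H = (F * Fᵀ)⁻¹)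
    (Z : Set (Fin d → ℝ)) (hZne : Z.Nonempty) (hZcl : IsClosed Z) (hZcx : Convex ℝ Z)
    (x0 : Fin d → ℝ) (hx0 : x0 ∈ Z)
    (η : ℝ) (hη : 0 < η)
    (sgn : ℝ → ℝ) (hsgn : ∀ t : ℝ, t ≠ 0 → sgn t = t / |t|)
    (hsgn0 : sgn 0 ∈ Set.Icc (-1 : ℝ) 1)
    -- the SGD trajectory, as a function of the sampled indices ξ₀, …, ξ_T
    (traj : (Fin (T+1) → Fin n) → ℕ → (Fin d → ℝ))
    (htraj0 : ∀ ξ, traj ξ 0 = x0)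
    (htrajZ : ∀ ξ t, traj ξ t ∈ Z)
    (hupdate : ∀ ξ (t : Fin (T+1)),
      IsMinOn (fun x =>
          η * (sgn (A (ξ t) ⬝ᵥ traj ξ t.1 - b (ξ t)) / prob (ξ t)) * (A (ξ t) ⬝ᵥ x)
            + (1/2) * normHsq H (traj ξ t.1 - x)) Z (traj ξ (t.1 + 1)))
    (xbar : (Fin (T+1) → Fin n) → (Fin d → ℝ))
    (hxbar : ∀ ξ, xbar ξ = ((T : ℝ) + 1)⁻¹ • ∑ t ∈ Finset.range (T+1), traj ξ t)
    (xstar : Fin d → ℝ) (hxstarZ : xstar ∈ Z) (hxstar : ∀ x ∈ Z, f xstar ≤ f x)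
    (c1 : ℝ) (hc1 : c1 = (1 + γ) / (1 - γ)) :
    (∑ ξ : Fin (T+1) → Fin n, (∏ t, prob (ξ t)) * f (xbar ξ)) - f xstar
      ≤ normHsq H (xstar - x0) / (2 * η * ((T : ℝ) + 1))
        + (η / 2) * (c1 * α * entry1Norm (R * F)) ^ 2 := by
  classical
  -- ### basic matrix facts
  have hFdet : IsUnit F.det := (Matrix.isUnit_iff_isUnit_det F).mp hF
  have hRdet : IsUnit R.det := (Matrix.isUnit_iff_isUnit_det R).mp hR
  have hB : ∀ v w : Fin d → ℝ, v ⬝ᵥ (H *ᵥ w) = (F⁻¹ *ᵥ v) ⬝ᵥ (F⁻¹ *ᵥ w) := by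
    intro v w
    rw [hH, Matrix.mul_inv_rev, ← Matrix.mulVec_mulVec, Matrix.dotProduct_mulVec v,
      ← Matrix.transpose_nonsing_inv, Matrix.vecMul_transpose]
  have hBsymm : ∀ v w : Fin d → ℝ, v ⬝ᵥ (H *ᵥ w) = w ⬝ᵥ (H *ᵥ v) := by
    intro v w; rw [hB, hB, dotProduct_comm]
  have hqnn : ∀ v : Fin d → ℝ, 0 ≤ normHsq H v := by
    intro v
    rw [normHsq, hB]
    exact Finset.sum_nonneg fun i _ => mul_self_nonneg _
  have hcancel : ∀ u : Fin d → ℝ, F *ᵥ (F⁻¹ *ᵥ u) = u := by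
    intro u
    rw [Matrix.mulVec_mulVec, Matrix.mul_nonsing_inv F hFdet, Matrix.one_mulVec]
  have hqzero : ∀ v : Fin d → ℝ, normHsq H v ≤ 0 → v = 0 := by
    intro v hv
    rw [normHsq, hB] at hv
    have h0 : F⁻¹ *ᵥ v = 0 := by
      by_contra hne
      have : 0 < (F⁻¹ *ᵥ v) ⬝ᵥ (F⁻¹ *ᵥ v) := by
        obtain ⟨i, hi⟩ := Function.ne_iff.mp hne
        have : 0 < (F⁻¹ *ᵥ v) i * (F⁻¹ *ᵥ v) i := by
          have := mul_self_nonneg ((F⁻¹ *ᵥ v) i)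
          rcases this.lt_or_eq with h | h
          · exact h
          · exact absurd (by nlinarith [sq_nonneg ((F⁻¹ *ᵥ v) i)] : (F⁻¹ *ᵥ v) i = 0) hi
        exact Finset.sum_pos' (fun j _ => mul_self_nonneg _) ⟨i, mem_univ i, this⟩
      linarith
    have := congrArg (fun w => F *ᵥ w) h0
    simpa [hcancel v, Matrix.mulVec_zero] using this
  have hqneg : ∀ v : Fin d → ℝ, normHsq H (-v) = normHsq H v := by
    intro v; rw [normHsq, normHsq, Matrix.mulVec_neg, dotProduct_neg,
      neg_dotProduct, neg_neg]
  -- ### probability facts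
  have hSpos : 0 < ∑ j, lam j := hlamsum
  have hgam : (0:ℝ) < 1 - γ := by linarith
  have hu_nn : ∀ i, 0 ≤ l1Norm ((A * R⁻¹) i) := fun i =>
    Finset.sum_nonneg fun j _ => abs_nonneg _
  have hlam_nn : ∀ i, 0 ≤ lam i := fun i =>
    le_trans (mul_nonneg hgam.le (hu_nn i)) (hlam i).1
  have hprob_nn : ∀ i, 0 ≤ prob i := fun i => by
    rw [hprob]; exact div_nonneg (hlam_nn i) hSpos.le
  have hprob_sum : ∑ i, prob i = 1 := by
    simp only [hprob]
    rw [← Finset.sum_div]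
    exact div_self (ne_of_gt hSpos)
  have hsum_u : ∑ i, l1Norm ((A * R⁻¹) i) = entry1Norm (A * R⁻¹) := rfl
  have hαU : entry1Norm (A * R⁻¹) ≤ α := hcond.2.1
  have hα0 : 0 ≤ α := by
    have h1 : 0 ≤ entry1Norm (A * R⁻¹) := by
      rw [← hsum_u]; exact Finset.sum_nonneg fun i _ => hu_nn i
    linarith
  have hS_le : (∑ j, lam j) ≤ (1 + γ) * α := by
    have h1 : (∑ j, lam j) ≤ ∑ i, (1 + γ) * l1Norm ((A * R⁻¹) i) :=
      Finset.sum_le_sum fun i _ => (hlam i).2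
    rw [← Finset.mul_sum, hsum_u] at h1
    have h2 := mul_le_mul_of_nonneg_left hαU (by linarith : (0:ℝ) ≤ 1 + γ)
    linarith
  have hc1_ge1 : 1 ≤ c1 := by
    rw [hc1, le_div_iff₀ hgam]; linarith
  have hc1_nn : 0 ≤ c1 := le_trans zero_le_one hc1_ge1
  have hAzero : ∀ i, prob i = 0 → ∀ j, A i j = 0 := by
    intro i hpi j
    have hlami : lam i = 0 := by
      rw [hprob] at hpi
      rcases div_eq_zero_iff.mp hpi with h | h
      · exact h
      · exact absurd h (ne_of_gt hSpos)
    have huzero : l1Norm ((A * R⁻¹) i) = 0 := by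
      have h1 := (hlam i).1
      rw [hlami] at h1
      nlinarith [hu_nn i]
    have hUij : ∀ k, (A * R⁻¹) i k = 0 := by
      intro k
      have h2 : ∀ k ∈ (univ : Finset (Fin d)), (0:ℝ) ≤ |(A * R⁻¹) i k| :=
        fun k _ => abs_nonneg _
      have h3 := (Finset.sum_eq_zero_iff_of_nonneg h2).mp huzero k (mem_univ k)
      exact abs_eq_zero.mp h3
    have hArow : A = (A * R⁻¹) * R := (Matrix.nonsing_inv_mul_cancel_right R A hRdet).symm
    rw [hArow, Matrix.mul_apply]
    exact Finset.sum_eq_zero fun k _ => by rw [hUij k, zero_mul]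
  -- ### second-moment quantities
  have hρnn : 0 ≤ entry1Norm (R * F) := Finset.sum_nonneg fun i _ =>
    Finset.sum_nonneg fun j _ => abs_nonneg _
  have hQnn : ∀ i, 0 ≤ ∑ k, ((A * F) i k) ^ 2 := fun i =>
    Finset.sum_nonneg fun k _ => sq_nonneg _
  have hAF : A * F = (A * R⁻¹) * (R * F) := by
    rw [← Matrix.mul_assoc, Matrix.nonsing_inv_mul_cancel_right R A hRdet]
  have hrow : ∀ i, l1Norm ((A * F) i) ≤ l1Norm ((A * R⁻¹) i) * entry1Norm (R * F) := by
    intro i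
    have h1 : l1Norm ((A * F) i) = ∑ k, |∑ j, (A * R⁻¹) i j * (R * F) j k| := by
      rw [l1Norm]
      exact Finset.sum_congr rfl fun k _ => by rw [hAF, Matrix.mul_apply]
    rw [h1]
    calc ∑ k, |∑ j, (A * R⁻¹) i j * (R * F) j k|
        ≤ ∑ k, ∑ j, |(A * R⁻¹) i j * (R * F) j k| :=
          Finset.sum_le_sum fun k _ => Finset.abs_sum_le_sum_abs _ _
      _ = ∑ j, ∑ k, |(A * R⁻¹) i j| * |(R * F) j k| := by
          rw [Finset.sum_comm]
          exact Finset.sum_congr rfl fun j _ => Finset.sum_congr rfl fun k _ => abs_mul _ _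
      _ = ∑ j, |(A * R⁻¹) i j| * ∑ k, |(R * F) j k| := by
          exact Finset.sum_congr rfl fun j _ => (Finset.mul_sum _ _ _).symm
      _ ≤ ∑ j, |(A * R⁻¹) i j| * entry1Norm (R * F) := by
          refine Finset.sum_le_sum fun j _ => mul_le_mul_of_nonneg_left ?_ (abs_nonneg _)
          exact Finset.single_le_sum (f := fun j' => ∑ k, |(R * F) j' k|)
            (fun j' _ => Finset.sum_nonneg fun k _ => abs_nonneg _) (mem_univ j)
      _ = l1Norm ((A * R⁻¹) i) * entry1Norm (R * F) := by
          rw [l1Norm, Finset.sum_mul]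
  have hQle : ∀ i, (∑ k, ((A * F) i k) ^ 2)
      ≤ (l1Norm ((A * R⁻¹) i) * entry1Norm (R * F)) ^ 2 := by
    intro i
    calc ∑ k, ((A * F) i k) ^ 2 ≤ (∑ k, |(A * F) i k|) ^ 2 := sq_sum_le_sum_abs_sq _
      _ = (l1Norm ((A * F) i)) ^ 2 := by rw [l1Norm]
      _ ≤ (l1Norm ((A * R⁻¹) i) * entry1Norm (R * F)) ^ 2 := by
          refine pow_le_pow_left₀ ?_ (hrow i) 2
          exact Finset.sum_nonneg fun k _ => abs_nonneg _
  have hsgn_abs : ∀ s : ℝ, |sgn s| ≤ 1 := by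
    intro s
    by_cases hs : s = 0
    · subst hs; rw [abs_le]; exact ⟨hsgn0.1, hsgn0.2⟩
    · rw [hsgn s hs, abs_div, abs_abs, div_self (abs_ne_zero.mpr hs)]
  -- ### pointwise expectation claims
  have claimG : ∀ y : Fin d → ℝ,
      f y - f xstar ≤ ∑ i, prob i *
        ((sgn (A i ⬝ᵥ y - b i) / prob i) * (A i ⬝ᵥ (y - xstar))) := by
    intro y
    rw [hf]
    simp only [l1Norm]
    rw [← Finset.sum_sub_distrib]
    refine Finset.sum_le_sum fun i _ => ?_
    have hsub : (A *ᵥ y - b) i = A i ⬝ᵥ y - b i := rfl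
    have hsub2 : (A *ᵥ xstar - b) i = A i ⬝ᵥ xstar - b i := rfl
    rw [hsub, hsub2]
    have hdiff : A i ⬝ᵥ (y - xstar) = (A i ⬝ᵥ y - b i) - (A i ⬝ᵥ xstar - b i) := by
      rw [dotProduct_sub]; ring
    by_cases hpi : prob i = 0
    · have hA0 := hAzero i hpi
      have hdot : ∀ z : Fin d → ℝ, A i ⬝ᵥ z = 0 := fun z =>
        Finset.sum_eq_zero fun j _ => by rw [hA0 j, zero_mul]
      rw [hpi, hdot, hdot, hdot]
      simp
    · have hpi' : 0 < prob i := lt_of_le_of_ne (hprob_nn i) (Ne.symm hpi)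
      have heq : prob i * ((sgn (A i ⬝ᵥ y - b i) / prob i) * (A i ⬝ᵥ (y - xstar)))
          = sgn (A i ⬝ᵥ y - b i) * (A i ⬝ᵥ (y - xstar)) := by
        field_simp
      rw [heq, hdiff]
      by_cases hu : (A i ⬝ᵥ y - b i) = 0
      · rw [hu]
        have h1 : |sgn 0 * (A i ⬝ᵥ xstar - b i)| ≤ |A i ⬝ᵥ xstar - b i| := by
          rw [abs_mul]
          exact mul_le_of_le_one_left (abs_nonneg _) (hsgn_abs 0)
        have h2 := le_abs_self (sgn 0 * (A i ⬝ᵥ xstar - b i))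
        simp only [abs_zero]
        nlinarith
      · rw [hsgn _ hu, div_mul_eq_mul_div, le_div_iff₀ (abs_pos.mpr hu)]
        have h1 : (A i ⬝ᵥ y - b i) * (A i ⬝ᵥ xstar - b i)
            ≤ |A i ⬝ᵥ y - b i| * |A i ⬝ᵥ xstar - b i| := by
          rw [← abs_mul]; exact le_abs_self _
        nlinarith [abs_mul_abs_self (A i ⬝ᵥ y - b i), abs_nonneg (A i ⬝ᵥ y - b i),
          abs_nonneg (A i ⬝ᵥ xstar - b i)]
  have claimQ : ∀ y : Fin d → ℝ,
      ∑ i, prob i * ((sgn (A i ⬝ᵥ y - b i) / prob i) ^ 2 * ∑ k, ((A * F) i k) ^ 2)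
        ≤ (c1 * α * entry1Norm (R * F)) ^ 2 := by
    intro y
    have hterm : ∀ i ∈ (univ : Finset (Fin n)),
        prob i * ((sgn (A i ⬝ᵥ y - b i) / prob i) ^ 2 * ∑ k, ((A * F) i k) ^ 2)
          ≤ c1 * α * entry1Norm (R * F) ^ 2 * l1Norm ((A * R⁻¹) i) := by
      intro i _
      by_cases hpi : prob i = 0
      · rw [hpi, zero_mul]
        have : 0 ≤ c1 * α * entry1Norm (R * F) ^ 2 * l1Norm ((A * R⁻¹) i) := by
          apply mul_nonneg
          apply mul_nonneg (mul_nonneg hc1_nn hα0) (sq_nonneg _)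
          exact hu_nn i
        linarith
      · have hpi' : 0 < prob i := lt_of_le_of_ne (hprob_nn i) (Ne.symm hpi)
        have h1 : prob i * ((sgn (A i ⬝ᵥ y - b i) / prob i) ^ 2 * ∑ k, ((A * F) i k) ^ 2)
            = sgn (A i ⬝ᵥ y - b i) ^ 2 * (∑ k, ((A * F) i k) ^ 2) / prob i := by
          field_simp
        have h2 : sgn (A i ⬝ᵥ y - b i) ^ 2 ≤ 1 := by
          have h3 := hsgn_abs (A i ⬝ᵥ y - b i)
          nlinarith [abs_nonneg (sgn (A i ⬝ᵥ y - b i)), sq_abs (sgn (A i ⬝ᵥ y - b i))]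
        have h3 : sgn (A i ⬝ᵥ y - b i) ^ 2 * (∑ k, ((A * F) i k) ^ 2)
            ≤ ∑ k, ((A * F) i k) ^ 2 := by
          nlinarith [hQnn i, sq_nonneg (sgn (A i ⬝ᵥ y - b i))]
        -- key: u_i^2 ≤ c1 * α * u_i * prob i
        have hup : (1 - γ) * l1Norm ((A * R⁻¹) i) / (∑ j, lam j) ≤ prob i := by
          rw [hprob]
          exact (div_le_div_iff_of_pos_right hSpos).mpr (hlam i).1
        have key_u : l1Norm ((A * R⁻¹) i) ^ 2 ≤ c1 * α * l1Norm ((A * R⁻¹) i) * prob i := by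
          have h5 : c1 * (1 - γ) = 1 + γ := by
            rw [hc1]; field_simp
          have h6 : c1 * α * l1Norm ((A * R⁻¹) i) * ((1 - γ) * l1Norm ((A * R⁻¹) i) / (∑ j, lam j))
              ≤ c1 * α * l1Norm ((A * R⁻¹) i) * prob i :=
            mul_le_mul_of_nonneg_left hup
              (mul_nonneg (mul_nonneg hc1_nn hα0) (hu_nn i))
          have h7 : l1Norm ((A * R⁻¹) i) ^ 2
              ≤ c1 * α * l1Norm ((A * R⁻¹) i) * ((1 - γ) * l1Norm ((A * R⁻¹) i) / (∑ j, lam j)) := by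
            rw [← mul_div_assoc, le_div_iff₀ hSpos]
            have h8 : l1Norm ((A * R⁻¹) i) ^ 2 * (∑ j, lam j)
                ≤ l1Norm ((A * R⁻¹) i) ^ 2 * ((1 + γ) * α) :=
              mul_le_mul_of_nonneg_left hS_le (sq_nonneg _)
            have h9 : c1 * α * l1Norm ((A * R⁻¹) i) * ((1 - γ) * l1Norm ((A * R⁻¹) i))
                = (1 + γ) * α * l1Norm ((A * R⁻¹) i) ^ 2 := by
              rw [← h5]; ring
            rw [h9]
            calc l1Norm ((A * R⁻¹) i) ^ 2 * (∑ j, lam j)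
                ≤ l1Norm ((A * R⁻¹) i) ^ 2 * ((1 + γ) * α) := h8
              _ = (1 + γ) * α * l1Norm ((A * R⁻¹) i) ^ 2 := by ring
          linarith
        have h4 : (∑ k, ((A * F) i k) ^ 2)
            ≤ c1 * α * entry1Norm (R * F) ^ 2 * l1Norm ((A * R⁻¹) i) * prob i := by
          calc (∑ k, ((A * F) i k) ^ 2)
              ≤ (l1Norm ((A * R⁻¹) i) * entry1Norm (R * F)) ^ 2 := hQle i
            _ = l1Norm ((A * R⁻¹) i) ^ 2 * entry1Norm (R * F) ^ 2 := by ring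
            _ ≤ (c1 * α * l1Norm ((A * R⁻¹) i) * prob i) * entry1Norm (R * F) ^ 2 :=
                mul_le_mul_of_nonneg_right key_u (sq_nonneg _)
            _ = c1 * α * entry1Norm (R * F) ^ 2 * l1Norm ((A * R⁻¹) i) * prob i := by ring
        rw [h1, div_le_iff₀ hpi']
        calc sgn (A i ⬝ᵥ y - b i) ^ 2 * (∑ k, ((A * F) i k) ^ 2)
            ≤ ∑ k, ((A * F) i k) ^ 2 := h3
          _ ≤ c1 * α * entry1Norm (R * F) ^ 2 * l1Norm ((A * R⁻¹) i) * prob i := h4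
    calc ∑ i, prob i * ((sgn (A i ⬝ᵥ y - b i) / prob i) ^ 2 * ∑ k, ((A * F) i k) ^ 2)
        ≤ ∑ i, c1 * α * entry1Norm (R * F) ^ 2 * l1Norm ((A * R⁻¹) i) :=
          Finset.sum_le_sum hterm
      _ = c1 * α * entry1Norm (R * F) ^ 2 * entry1Norm (A * R⁻¹) := by
          rw [← Finset.mul_sum, hsum_u]
      _ ≤ c1 * α * entry1Norm (R * F) ^ 2 * α := by
          refine mul_le_mul_of_nonneg_left hαU ?_
          exact mul_nonneg (mul_nonneg hc1_nn hα0) (sq_nonneg _)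
      _ ≤ (c1 * α * entry1Norm (R * F)) ^ 2 := by
          nlinarith [mul_nonneg (mul_nonneg (sub_nonneg.mpr hc1_ge1) hc1_nn)
            (sq_nonneg (α * entry1Norm (R * F)))]
  -- ### bilinear expansion helper
  have hexp : ∀ (u w : Fin d → ℝ) (m : ℝ), normHsq H (u - m • w)
      = normHsq H u - m * (u ⬝ᵥ (H *ᵥ w)) - m * (w ⬝ᵥ (H *ᵥ u)) + m^2 * normHsq H w := by
    intro u w m
    simp only [normHsq, Matrix.mulVec_sub, Matrix.mulVec_smul, dotProduct_sub,
      sub_dotProduct, dotProduct_smul, smul_dotProduct, smul_eq_mul]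
    ring
  -- ### uniqueness of minimizers of the update objective
  have huniq : ∀ (c : ℝ) (a z : Fin d → ℝ) (y y' : Fin d → ℝ), y ∈ Z → y' ∈ Z →
      IsMinOn (fun x => c * (a ⬝ᵥ x) + (1/2) * normHsq H (z - x)) Z y →
      IsMinOn (fun x => c * (a ⬝ᵥ x) + (1/2) * normHsq H (z - x)) Z y' → y = y' := by
    intro c a z y y' hyZ hy'Z hy hy'
    have hmZ : (1/2 : ℝ) • y + (1/2 : ℝ) • y' ∈ Z :=
      hZcx hyZ hy'Z (by norm_num) (by norm_num) (by norm_num)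
    have h1 : c * (a ⬝ᵥ y) + (1/2) * normHsq H (z - y)
        ≤ c * (a ⬝ᵥ y') + (1/2) * normHsq H (z - y') := isMinOn_iff.mp hy y' hy'Z
    have h2 : c * (a ⬝ᵥ y') + (1/2) * normHsq H (z - y')
        ≤ c * (a ⬝ᵥ y) + (1/2) * normHsq H (z - y) := isMinOn_iff.mp hy' y hyZ
    have h3 : c * (a ⬝ᵥ y) + (1/2) * normHsq H (z - y)
        ≤ c * (a ⬝ᵥ ((1/2 : ℝ) • y + (1/2 : ℝ) • y'))
          + (1/2) * normHsq H (z - ((1/2 : ℝ) • y + (1/2 : ℝ) • y')) :=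
      isMinOn_iff.mp hy _ hmZ
    have hm : z - ((1/2 : ℝ) • y + (1/2 : ℝ) • y')
        = (1/2 : ℝ) • (z - y) + (1/2 : ℝ) • (z - y') := by
      funext j
      simp only [Pi.add_apply, Pi.sub_apply, Pi.smul_apply, smul_eq_mul]
      ring
    have hyy : y - y' = (z - y') - (z - y) := by
      funext j
      simp only [Pi.sub_apply]
      ring
    have hiden : c * (a ⬝ᵥ ((1/2 : ℝ) • y + (1/2 : ℝ) • y'))
          + (1/2) * normHsq H (z - ((1/2 : ℝ) • y + (1/2 : ℝ) • y'))
        = (1/2) * (c * (a ⬝ᵥ y) + (1/2) * normHsq H (z - y))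
          + (1/2) * (c * (a ⬝ᵥ y') + (1/2) * normHsq H (z - y'))
          - (1/8) * normHsq H (y - y') := by
      rw [hm, hyy]
      simp only [normHsq, Matrix.mulVec_add, Matrix.mulVec_sub, Matrix.mulVec_smul,
        dotProduct_add, add_dotProduct, dotProduct_sub,
        sub_dotProduct, dotProduct_smul, smul_dotProduct, smul_eq_mul]
      ring
    have h4 : normHsq H (y - y') ≤ 0 := by
      rw [hiden] at h3
      linarith
    have h5 := hqzero _ h4
    exact sub_eq_zero.mp h5
  -- ### the trajectory is measurable w.r.t. past samples
  have hcongr : ∀ (k : ℕ), k ≤ T + 1 → ∀ ξ ξ' : Fin (T+1) → Fin n,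
      (∀ s : Fin (T+1), (s:ℕ) < k → ξ s = ξ' s) → traj ξ k = traj ξ' k := by
    intro k
    induction k with
    | zero => intro _ ξ ξ' _; rw [htraj0, htraj0]
    | succ k ih =>
      intro hk ξ ξ' hagree
      have hkT : k < T + 1 := Nat.lt_of_succ_le hk
      have hxt : traj ξ k = traj ξ' k :=
        ih hkT.le ξ ξ' (fun s hs => hagree s (lt_trans hs (Nat.lt_succ_self k)))
      have hξt : ξ ⟨k, hkT⟩ = ξ' ⟨k, hkT⟩ := hagree ⟨k, hkT⟩ (Nat.lt_succ_self k)
      have h1 := hupdate ξ ⟨k, hkT⟩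
      have h2 := hupdate ξ' ⟨k, hkT⟩
      simp only at h1 h2
      rw [hξt, hxt] at h1
      exact huniq _ _ _ _ _ (htrajZ ξ (k+1)) (htrajZ ξ' (k+1)) h1 h2
  -- ### the per-step descent inequality
  have key : ∀ (ξ : Fin (T+1) → Fin n) (t : Fin (T+1)),
      η * (sgn (A (ξ t) ⬝ᵥ traj ξ t.1 - b (ξ t)) / prob (ξ t)) * (A (ξ t) ⬝ᵥ (traj ξ t.1 - xstar))
        - η^2/2 * (sgn (A (ξ t) ⬝ᵥ traj ξ t.1 - b (ξ t)) / prob (ξ t))^2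
            * (∑ k, ((A * F) (ξ t) k)^2)
        ≤ (1/2) * normHsq H (traj ξ t.1 - xstar)
          - (1/2) * normHsq H (traj ξ (t.1+1) - xstar) := by
    intro ξ t
    set c := sgn (A (ξ t) ⬝ᵥ traj ξ t.1 - b (ξ t)) / prob (ξ t) with hcdef
    set a : Fin d → ℝ := A (ξ t) with hadef
    set xt := traj ξ t.1 with hxtdef
    set xp := traj ξ (t.1+1) with hxpdef
    have hmin := hupdate ξ t
    -- variational inequality at the minimizer
    have hVI : 0 ≤ η * c * (a ⬝ᵥ (xstar - xp)) - ((xt - xp) ⬝ᵥ (H *ᵥ (xstar - xp))) := by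
      apply vi_limit _ ((1/2) * normHsq H (xstar - xp))
        (mul_nonneg (by norm_num) (hqnn _))
      intro m hm0 hm1
      have hzZ : xp + m • (xstar - xp) ∈ Z := by
        have heq : xp + m • (xstar - xp) = (1 - m) • xp + m • xstar := by
          funext j
          simp only [Pi.add_apply, Pi.smul_apply, Pi.sub_apply, smul_eq_mul]
          ring
        rw [heq]
        exact hZcx (htrajZ ξ (t.1+1)) hxstarZ (by linarith) (by linarith) (by ring)
      have h5 : η * c * (a ⬝ᵥ xp) + (1/2) * normHsq H (xt - xp)
          ≤ η * c * (a ⬝ᵥ (xp + m • (xstar - xp)))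
            + (1/2) * normHsq H (xt - (xp + m • (xstar - xp))) :=
        isMinOn_iff.mp hmin _ hzZ
      have hsubst : xt - (xp + m • (xstar - xp)) = (xt - xp) - m • (xstar - xp) := by
        funext j
        simp only [Pi.add_apply, Pi.sub_apply, Pi.smul_apply, smul_eq_mul]
        ring
      have hdotadd : a ⬝ᵥ (xp + m • (xstar - xp)) = a ⬝ᵥ xp + m * (a ⬝ᵥ (xstar - xp)) := by
        rw [dotProduct_add, dotProduct_smul, smul_eq_mul]
      rw [hsubst, hdotadd, hexp (xt - xp) (xstar - xp) m,
        hBsymm (xstar - xp) (xt - xp)] at h5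
      nlinarith [h5]
    -- three-point identity
    have hthree : (xt - xp) ⬝ᵥ (H *ᵥ (xp - xstar))
        = (1/2) * normHsq H (xt - xstar) - (1/2) * normHsq H (xp - xstar)
          - (1/2) * normHsq H (xt - xp) := by
      have e1 : xt - xp = (xt - xstar) - (xp - xstar) := by
        funext j; simp only [Pi.sub_apply]; ring
      rw [e1]
      simp only [normHsq, Matrix.mulVec_sub, dotProduct_sub, sub_dotProduct]
      linear_combination (1/2 : ℝ) * hBsymm xt xp - (1/2 : ℝ) * hBsymm xt xstar
        + (1/2 : ℝ) * hBsymm xp xstar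
    -- Cauchy–Schwarz / Young step
    have hyoung : η * c * (a ⬝ᵥ (xt - xp)) - (1/2) * normHsq H (xt - xp)
        ≤ η^2/2 * c^2 * (∑ k, ((A * F) (ξ t) k)^2) := by
      have h1 : a ⬝ᵥ (xt - xp) = (Fᵀ *ᵥ a) ⬝ᵥ (F⁻¹ *ᵥ (xt - xp)) := by
        conv_lhs => rw [← hcancel (xt - xp)]
        rw [Matrix.dotProduct_mulVec a F _, Matrix.mulVec_transpose]
      have h2 : normHsq H (xt - xp) = (F⁻¹ *ᵥ (xt - xp)) ⬝ᵥ (F⁻¹ *ᵥ (xt - xp)) := by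
        rw [normHsq, hB]
      have h3 : (Fᵀ *ᵥ a) ⬝ᵥ (Fᵀ *ᵥ a) = ∑ k, ((A * F) (ξ t) k)^2 := by
        apply Finset.sum_congr rfl
        intro k _
        have hk : (Fᵀ *ᵥ a) k = (A * F) (ξ t) k := by
          rw [Matrix.mul_apply, Matrix.mulVec, dotProduct]
          exact Finset.sum_congr rfl fun j _ => by
            rw [Matrix.transpose_apply, hadef, mul_comm]
        rw [hk, sq]
      have h4 : 0 ≤ ((η * c) • (Fᵀ *ᵥ a) - F⁻¹ *ᵥ (xt - xp)) ⬝ᵥ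
          ((η * c) • (Fᵀ *ᵥ a) - F⁻¹ *ᵥ (xt - xp)) :=
        Finset.sum_nonneg fun k _ => mul_self_nonneg _
      have h5 : ((η * c) • (Fᵀ *ᵥ a) - F⁻¹ *ᵥ (xt - xp)) ⬝ᵥ
            ((η * c) • (Fᵀ *ᵥ a) - F⁻¹ *ᵥ (xt - xp))
          = (η * c)^2 * ((Fᵀ *ᵥ a) ⬝ᵥ (Fᵀ *ᵥ a))
            - 2 * (η * c) * ((Fᵀ *ᵥ a) ⬝ᵥ (F⁻¹ *ᵥ (xt - xp)))
            + (F⁻¹ *ᵥ (xt - xp)) ⬝ᵥ (F⁻¹ *ᵥ (xt - xp)) := by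
        simp only [dotProduct_sub, sub_dotProduct, dotProduct_smul,
          smul_dotProduct, smul_eq_mul]
        rw [dotProduct_comm (F⁻¹ *ᵥ (xt - xp)) (Fᵀ *ᵥ a)]
        ring
      rw [h1, h2, ← h3]
      rw [h5] at h4
      nlinarith [h4]
    -- combine
    have hsplit : η * c * (a ⬝ᵥ (xt - xstar))
        = η * c * (a ⬝ᵥ (xt - xp)) + η * c * (a ⬝ᵥ (xp - xstar)) := by
      have : a ⬝ᵥ (xt - xstar) = a ⬝ᵥ (xt - xp) + a ⬝ᵥ (xp - xstar) := by
        simp only [dotProduct_sub]; ring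
      rw [this]; ring
    have hflip1 : a ⬝ᵥ (xstar - xp) = -(a ⬝ᵥ (xp - xstar)) := by
      rw [← neg_sub xp xstar, dotProduct_neg]
    have hflip2 : (xt - xp) ⬝ᵥ (H *ᵥ (xstar - xp)) = -((xt - xp) ⬝ᵥ (H *ᵥ (xp - xstar))) := by
      rw [← neg_sub xp xstar, Matrix.mulVec_neg, dotProduct_neg]
    rw [hflip1, hflip2] at hVI
    nlinarith [hVI, hyoung, hthree, hsplit]
  -- ### telescoped per-trajectory bound
  have keysum : ∀ ξ : Fin (T+1) → Fin n,
      ∑ t : Fin (T+1), (η * (sgn (A (ξ t) ⬝ᵥ traj ξ t.1 - b (ξ t)) / prob (ξ t))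
            * (A (ξ t) ⬝ᵥ (traj ξ t.1 - xstar))
          - η^2/2 * (sgn (A (ξ t) ⬝ᵥ traj ξ t.1 - b (ξ t)) / prob (ξ t))^2
            * (∑ k, ((A * F) (ξ t) k)^2))
        ≤ (1/2) * normHsq H (xstar - x0) := by
    intro ξ
    have h1 : ∑ t : Fin (T+1), ((1/2) * normHsq H (traj ξ t.1 - xstar)
          - (1/2) * normHsq H (traj ξ (t.1+1) - xstar))
        = (1/2) * normHsq H (traj ξ 0 - xstar)
          - (1/2) * normHsq H (traj ξ (T+1) - xstar) := by
      rw [Fin.sum_univ_eq_sum_range (fun k => (1/2) * normHsq H (traj ξ k - xstar)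
        - (1/2) * normHsq H (traj ξ (k+1) - xstar)) (T+1)]
      exact Finset.sum_range_sub' (fun k => (1/2) * normHsq H (traj ξ k - xstar)) (T+1)
    have h2 := Finset.sum_le_sum (fun t (_ : t ∈ (univ : Finset (Fin (T+1)))) => key ξ t)
    rw [h1] at h2
    have h3 := hqnn (traj ξ (T+1) - xstar)
    have h4 : normHsq H (traj ξ 0 - xstar) = normHsq H (xstar - x0) := by
      rw [htraj0]
      have h5 : x0 - xstar = -(xstar - x0) := by rw [neg_sub]
      rw [h5, hqneg]
    rw [h4] at h2
    linarith
  -- ### n is positive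
  have hnpos : 0 < n := by
    rcases Nat.eq_zero_or_pos n with h | h
    · subst h
      simp at hlamsum
    · exact h
  -- ### total probability mass is 1
  have hw1 : ∑ ξ : Fin (T+1) → Fin n, (∏ s, prob (ξ s)) = 1 := by
    have h1 := Finset.prod_univ_sum (fun _ : Fin (T+1) => (univ : Finset (Fin n)))
      (fun _ j => prob j)
    rw [Fintype.piFinset_univ] at h1
    rw [← h1, hprob_sum, Finset.prod_const_one]
  have hwnn : ∀ ξ : Fin (T+1) → Fin n, 0 ≤ ∏ s, prob (ξ s) :=
    fun ξ => Finset.prod_nonneg fun s _ => hprob_nn _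
  -- ### the iterate at time t does not depend on the sample at time t
  have hyupd : ∀ (t : Fin (T+1)) (ξ : Fin (T+1) → Fin n) (i : Fin n),
      traj (Function.update ξ t i) t.1 = traj ξ t.1 := by
    intro t ξ i
    apply hcongr t.1 (le_of_lt t.isLt)
    intro s hs
    have hne : s ≠ t := fun hst => by rw [hst] at hs; exact lt_irrefl _ hs
    rw [Function.update_of_ne hne]
  -- ### expectation bounds, one per step
  have EstepG : ∀ t : Fin (T+1),
      ∑ ξ : Fin (T+1) → Fin n, (∏ s, prob (ξ s)) * (η * (f (traj ξ t.1) - f xstar))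
        ≤ ∑ ξ : Fin (T+1) → Fin n, (∏ s, prob (ξ s)) *
            (η * (sgn (A (ξ t) ⬝ᵥ traj ξ t.1 - b (ξ t)) / prob (ξ t))
              * (A (ξ t) ⬝ᵥ (traj ξ t.1 - xstar))) := by
    intro t
    refine cond_bound ⟨0, hnpos⟩ prob hprob_nn hprob_sum t (fun ξ => traj ξ t.1)
      (fun ξ i => hyupd t ξ i)
      (fun i z => η * (sgn (A i ⬝ᵥ z - b i) / prob i) * (A i ⬝ᵥ (z - xstar)))
      (fun z => η * (f z - f xstar)) ?_
    intro ξ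
    have h1 := claimG (traj ξ t.1)
    have h2 := mul_le_mul_of_nonneg_left h1 hη.le
    calc η * (f (traj ξ t.1) - f xstar)
        ≤ η * ∑ i, prob i * ((sgn (A i ⬝ᵥ traj ξ t.1 - b i) / prob i)
            * (A i ⬝ᵥ (traj ξ t.1 - xstar))) := h2
      _ = ∑ i, prob i * (η * (sgn (A i ⬝ᵥ traj ξ t.1 - b i) / prob i)
            * (A i ⬝ᵥ (traj ξ t.1 - xstar))) := by
          rw [Finset.mul_sum]
          exact Finset.sum_congr rfl fun i _ => by ring
  have EstepQ : ∀ t : Fin (T+1),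
      ∑ ξ : Fin (T+1) → Fin n, (∏ s, prob (ξ s)) *
          (-(η^2/2 * (c1 * α * entry1Norm (R * F))^2))
        ≤ ∑ ξ : Fin (T+1) → Fin n, (∏ s, prob (ξ s)) *
            (-(η^2/2 * (sgn (A (ξ t) ⬝ᵥ traj ξ t.1 - b (ξ t)) / prob (ξ t))^2
              * (∑ k, ((A * F) (ξ t) k)^2))) := by
    intro t
    refine cond_bound ⟨0, hnpos⟩ prob hprob_nn hprob_sum t (fun ξ => traj ξ t.1)
      (fun ξ i => hyupd t ξ i)
      (fun i z => -(η^2/2 * (sgn (A i ⬝ᵥ z - b i) / prob i)^2 * (∑ k, ((A * F) i k)^2)))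
      (fun _ => -(η^2/2 * (c1 * α * entry1Norm (R * F))^2)) ?_
    intro ξ
    have h1 := claimQ (traj ξ t.1)
    have h2 := mul_le_mul_of_nonneg_left h1 (by positivity : (0:ℝ) ≤ η^2/2)
    have h3 : ∑ i, prob i * (-(η^2/2 * (sgn (A i ⬝ᵥ traj ξ t.1 - b i) / prob i)^2
          * (∑ k, ((A * F) i k)^2)))
        = -(η^2/2 * ∑ i, prob i * ((sgn (A i ⬝ᵥ traj ξ t.1 - b i) / prob i)^2
          * (∑ k, ((A * F) i k)^2))) := by
      rw [Finset.mul_sum, ← Finset.sum_neg_distrib]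
      exact Finset.sum_congr rfl fun i _ => by ring
    rw [h3]
    linarith
  -- ### convexity step : f(average) ≤ average of f
  have hT1 : (0:ℝ) < (T:ℝ) + 1 := by positivity
  have hconv : ∀ ξ : Fin (T+1) → Fin n, f (xbar ξ) - f xstar
      ≤ ((T:ℝ)+1)⁻¹ * ∑ t ∈ Finset.range (T+1), (f (traj ξ t) - f xstar) := by
    intro ξ
    have hdsum : ∀ i : Fin n, A i ⬝ᵥ (∑ t ∈ Finset.range (T+1), traj ξ t)
        = ∑ t ∈ Finset.range (T+1), A i ⬝ᵥ traj ξ t := by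
      intro i
      simp only [dotProduct, Finset.sum_apply, Finset.mul_sum]
      exact Finset.sum_comm
    have hfb : f (xbar ξ) ≤ ((T:ℝ)+1)⁻¹ * ∑ t ∈ Finset.range (T+1), f (traj ξ t) := by
      rw [hf, hxbar]
      simp only [l1Norm]
      have hpoint : ∀ i : Fin n,
          (A *ᵥ (((T:ℝ)+1)⁻¹ • ∑ t ∈ Finset.range (T+1), traj ξ t) - b) i
            = ((T:ℝ)+1)⁻¹ * ∑ t ∈ Finset.range (T+1), (A i ⬝ᵥ traj ξ t - b i) := by
        intro i
        have h1 : (A *ᵥ (((T:ℝ)+1)⁻¹ • ∑ t ∈ Finset.range (T+1), traj ξ t) - b) i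
            = A i ⬝ᵥ (((T:ℝ)+1)⁻¹ • ∑ t ∈ Finset.range (T+1), traj ξ t) - b i := rfl
        rw [h1, dotProduct_smul, smul_eq_mul, hdsum, Finset.sum_sub_distrib,
          Finset.sum_const, Finset.card_range]
        have h2 : ((T:ℝ)+1)⁻¹ * ((T+1 : ℕ) • (b i)) = b i := by
          rw [nsmul_eq_mul]
          push_cast
          field_simp
        rw [mul_sub, h2]
      calc ∑ i, |(A *ᵥ (((T:ℝ)+1)⁻¹ • ∑ t ∈ Finset.range (T+1), traj ξ t) - b) i|
          = ∑ i, |((T:ℝ)+1)⁻¹ * ∑ t ∈ Finset.range (T+1), (A i ⬝ᵥ traj ξ t - b i)| := by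
            exact Finset.sum_congr rfl fun i _ => by rw [hpoint i]
        _ ≤ ∑ i, ((T:ℝ)+1)⁻¹ * ∑ t ∈ Finset.range (T+1), |A i ⬝ᵥ traj ξ t - b i| := by
            refine Finset.sum_le_sum fun i _ => ?_
            rw [abs_mul, abs_of_pos (by positivity : (0:ℝ) < ((T:ℝ)+1)⁻¹)]
            exact mul_le_mul_of_nonneg_left (Finset.abs_sum_le_sum_abs _ _)
              (by positivity)
        _ = ((T:ℝ)+1)⁻¹ * ∑ t ∈ Finset.range (T+1), ∑ i, |A i ⬝ᵥ traj ξ t - b i| := by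
            rw [← Finset.mul_sum]
            rw [Finset.sum_comm]
        _ = ((T:ℝ)+1)⁻¹ * ∑ t ∈ Finset.range (T+1), ∑ i, |(A *ᵥ traj ξ t - b) i| := rfl
    have h6 : ((T:ℝ)+1)⁻¹ * ∑ t ∈ Finset.range (T+1), (f (traj ξ t) - f xstar)
        = ((T:ℝ)+1)⁻¹ * (∑ t ∈ Finset.range (T+1), f (traj ξ t)) - f xstar := by
      rw [Finset.sum_sub_distrib, Finset.sum_const, Finset.card_range, mul_sub,
        nsmul_eq_mul]
      push_cast
      field_simp
    rw [h6]
    have h7 : f (xbar ξ) ≤ ((T:ℝ)+1)⁻¹ * ∑ t ∈ Finset.range (T+1), f (traj ξ t) := hfb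
    linarith
  -- ### assembling the expectation bound
  -- total per-trajectory bound, in expectation
  have total1 : ∑ t ∈ Finset.range (T+1), ∑ ξ : Fin (T+1) → Fin n,
        (∏ s, prob (ξ s)) * (η * (f (traj ξ t) - f xstar))
      ≤ (1/2) * normHsq H (xstar - x0)
        + ((T:ℝ)+1) * (η^2/2 * (c1 * α * entry1Norm (R * F))^2) := by
    have hA : ∑ ξ : Fin (T+1) → Fin n, (∏ s, prob (ξ s)) *
          (∑ t : Fin (T+1), (η * (sgn (A (ξ t) ⬝ᵥ traj ξ t.1 - b (ξ t)) / prob (ξ t))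
              * (A (ξ t) ⬝ᵥ (traj ξ t.1 - xstar))
            - η^2/2 * (sgn (A (ξ t) ⬝ᵥ traj ξ t.1 - b (ξ t)) / prob (ξ t))^2
              * (∑ k, ((A * F) (ξ t) k)^2)))
        ≤ (1/2) * normHsq H (xstar - x0) := by
      calc ∑ ξ : Fin (T+1) → Fin n, (∏ s, prob (ξ s)) * (∑ t : Fin (T+1), _)
          ≤ ∑ ξ : Fin (T+1) → Fin n, (∏ s, prob (ξ s)) * ((1/2) * normHsq H (xstar - x0)) :=
            Finset.sum_le_sum fun ξ _ => mul_le_mul_of_nonneg_left (keysum ξ) (hwnn ξ)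
        _ = (1/2) * normHsq H (xstar - x0) := by rw [← Finset.sum_mul, hw1, one_mul]
    -- exchange the sums in hA
    have hswap : ∑ ξ : Fin (T+1) → Fin n, (∏ s, prob (ξ s)) *
          (∑ t : Fin (T+1), (η * (sgn (A (ξ t) ⬝ᵥ traj ξ t.1 - b (ξ t)) / prob (ξ t))
              * (A (ξ t) ⬝ᵥ (traj ξ t.1 - xstar))
            - η^2/2 * (sgn (A (ξ t) ⬝ᵥ traj ξ t.1 - b (ξ t)) / prob (ξ t))^2
              * (∑ k, ((A * F) (ξ t) k)^2)))
        = ∑ t : Fin (T+1), ∑ ξ : Fin (T+1) → Fin n, (∏ s, prob (ξ s)) *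
            (η * (sgn (A (ξ t) ⬝ᵥ traj ξ t.1 - b (ξ t)) / prob (ξ t))
              * (A (ξ t) ⬝ᵥ (traj ξ t.1 - xstar))
            - η^2/2 * (sgn (A (ξ t) ⬝ᵥ traj ξ t.1 - b (ξ t)) / prob (ξ t))^2
              * (∑ k, ((A * F) (ξ t) k)^2)) := by
      rw [← Finset.sum_comm]
      exact Finset.sum_congr rfl fun ξ _ => Finset.mul_sum _ _ _
    rw [hswap] at hA
    -- per-t lower bound of the inner sum
    have hper : ∀ t : Fin (T+1),
        (∑ ξ : Fin (T+1) → Fin n, (∏ s, prob (ξ s)) * (η * (f (traj ξ t.1) - f xstar)))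
          - η^2/2 * (c1 * α * entry1Norm (R * F))^2
        ≤ ∑ ξ : Fin (T+1) → Fin n, (∏ s, prob (ξ s)) *
            (η * (sgn (A (ξ t) ⬝ᵥ traj ξ t.1 - b (ξ t)) / prob (ξ t))
              * (A (ξ t) ⬝ᵥ (traj ξ t.1 - xstar))
            - η^2/2 * (sgn (A (ξ t) ⬝ᵥ traj ξ t.1 - b (ξ t)) / prob (ξ t))^2
              * (∑ k, ((A * F) (ξ t) k)^2)) := by
      intro t
      have h1 := EstepG t
      have h2 := EstepQ t
      have h3 : ∑ ξ : Fin (T+1) → Fin n, (∏ s, prob (ξ s)) *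
            (-(η^2/2 * (c1 * α * entry1Norm (R * F))^2))
          = -(η^2/2 * (c1 * α * entry1Norm (R * F))^2) := by
        rw [← Finset.sum_mul, hw1, one_mul]
      rw [h3] at h2
      have h4 : ∑ ξ : Fin (T+1) → Fin n, (∏ s, prob (ξ s)) *
            (η * (sgn (A (ξ t) ⬝ᵥ traj ξ t.1 - b (ξ t)) / prob (ξ t))
              * (A (ξ t) ⬝ᵥ (traj ξ t.1 - xstar))
            - η^2/2 * (sgn (A (ξ t) ⬝ᵥ traj ξ t.1 - b (ξ t)) / prob (ξ t))^2
              * (∑ k, ((A * F) (ξ t) k)^2))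
          = (∑ ξ : Fin (T+1) → Fin n, (∏ s, prob (ξ s)) *
              (η * (sgn (A (ξ t) ⬝ᵥ traj ξ t.1 - b (ξ t)) / prob (ξ t))
                * (A (ξ t) ⬝ᵥ (traj ξ t.1 - xstar))))
            + ∑ ξ : Fin (T+1) → Fin n, (∏ s, prob (ξ s)) *
              (-(η^2/2 * (sgn (A (ξ t) ⬝ᵥ traj ξ t.1 - b (ξ t)) / prob (ξ t))^2
                * (∑ k, ((A * F) (ξ t) k)^2))) := by
        rw [← Finset.sum_add_distrib]
        exact Finset.sum_congr rfl fun ξ _ => by ring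
      rw [h4]
      linarith
    have h5 : ∑ t ∈ Finset.range (T+1), ∑ ξ : Fin (T+1) → Fin n,
          (∏ s, prob (ξ s)) * (η * (f (traj ξ t) - f xstar))
        = ∑ t : Fin (T+1), ∑ ξ : Fin (T+1) → Fin n,
          (∏ s, prob (ξ s)) * (η * (f (traj ξ t.1) - f xstar)) := by
      rw [Fin.sum_univ_eq_sum_range (fun k => ∑ ξ : Fin (T+1) → Fin n,
        (∏ s, prob (ξ s)) * (η * (f (traj ξ k) - f xstar))) (T+1)]
    rw [h5]
    have h6 := Finset.sum_le_sum (fun t (_ : t ∈ (univ : Finset (Fin (T+1)))) => hper t)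
    rw [Finset.sum_sub_distrib, Finset.sum_const, Finset.card_univ, Fintype.card_fin,
      nsmul_eq_mul] at h6
    push_cast at h6
    linarith
  -- ### final computation
  have hfinal1 : (∑ ξ : Fin (T+1) → Fin n, (∏ t, prob (ξ t)) * f (xbar ξ)) - f xstar
      = ∑ ξ : Fin (T+1) → Fin n, (∏ t, prob (ξ t)) * (f (xbar ξ) - f xstar) := by
    have h1 : ∑ ξ : Fin (T+1) → Fin n, (∏ t, prob (ξ t)) * (f (xbar ξ) - f xstar)
        = (∑ ξ : Fin (T+1) → Fin n, (∏ t, prob (ξ t)) * f (xbar ξ))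
          - ∑ ξ : Fin (T+1) → Fin n, (∏ t, prob (ξ t)) * f xstar := by
      rw [← Finset.sum_sub_distrib]
      exact Finset.sum_congr rfl fun ξ _ => by ring
    rw [h1, ← Finset.sum_mul, hw1, one_mul]
  rw [hfinal1]
  have hA2 : ∑ ξ : Fin (T+1) → Fin n, (∏ t, prob (ξ t)) * (f (xbar ξ) - f xstar)
      ≤ ((T:ℝ)+1)⁻¹ * ∑ t ∈ Finset.range (T+1), ∑ ξ : Fin (T+1) → Fin n,
          (∏ s, prob (ξ s)) * (f (traj ξ t) - f xstar) := by
    calc ∑ ξ : Fin (T+1) → Fin n, (∏ t, prob (ξ t)) * (f (xbar ξ) - f xstar)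
        ≤ ∑ ξ : Fin (T+1) → Fin n, (∏ t, prob (ξ t)) *
            (((T:ℝ)+1)⁻¹ * ∑ t ∈ Finset.range (T+1), (f (traj ξ t) - f xstar)) :=
          Finset.sum_le_sum fun ξ _ => mul_le_mul_of_nonneg_left (hconv ξ) (hwnn ξ)
      _ = ((T:ℝ)+1)⁻¹ * ∑ ξ : Fin (T+1) → Fin n, ∑ t ∈ Finset.range (T+1),
            (∏ s, prob (ξ s)) * (f (traj ξ t) - f xstar) := by
          rw [Finset.mul_sum]
          refine Finset.sum_congr rfl fun ξ _ => ?_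
          rw [← Finset.mul_sum]
          ring
      _ = ((T:ℝ)+1)⁻¹ * ∑ t ∈ Finset.range (T+1), ∑ ξ : Fin (T+1) → Fin n,
            (∏ s, prob (ξ s)) * (f (traj ξ t) - f xstar) := by
          rw [Finset.sum_comm]
  have hB2 : ∑ t ∈ Finset.range (T+1), ∑ ξ : Fin (T+1) → Fin n,
        (∏ s, prob (ξ s)) * (f (traj ξ t) - f xstar)
      ≤ (1/η) * ((1/2) * normHsq H (xstar - x0)
          + ((T:ℝ)+1) * (η^2/2 * (c1 * α * entry1Norm (R * F))^2)) := by
    have h1 : ∑ t ∈ Finset.range (T+1), ∑ ξ : Fin (T+1) → Fin n,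
          (∏ s, prob (ξ s)) * (η * (f (traj ξ t) - f xstar))
        = η * ∑ t ∈ Finset.range (T+1), ∑ ξ : Fin (T+1) → Fin n,
            (∏ s, prob (ξ s)) * (f (traj ξ t) - f xstar) := by
      rw [Finset.mul_sum]
      refine Finset.sum_congr rfl fun t _ => ?_
      rw [Finset.mul_sum]
      exact Finset.sum_congr rfl fun ξ _ => by ring
    have h2 := total1
    rw [h1] at h2
    have h3 : (1/η) * ((1/2) * normHsq H (xstar - x0)
          + ((T:ℝ)+1) * (η^2/2 * (c1 * α * entry1Norm (R * F))^2))
        = ((1/2) * normHsq H (xstar - x0)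
          + ((T:ℝ)+1) * (η^2/2 * (c1 * α * entry1Norm (R * F))^2)) / η := by
      ring
    rw [h3, le_div_iff₀ hη]
    nlinarith [h2]
  have hKey : ((T:ℝ)+1)⁻¹ * ((1/η) * ((1/2) * normHsq H (xstar - x0)
        + ((T:ℝ)+1) * (η^2/2 * (c1 * α * entry1Norm (R * F))^2)))
      = normHsq H (xstar - x0) / (2 * η * ((T:ℝ) + 1))
        + (η / 2) * (c1 * α * entry1Norm (R * F)) ^ 2 := by
    field_simp
  calc ∑ ξ : Fin (T+1) → Fin n, (∏ t, prob (ξ t)) * (f (xbar ξ) - f xstar)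
      ≤ ((T:ℝ)+1)⁻¹ * ∑ t ∈ Finset.range (T+1), ∑ ξ : Fin (T+1) → Fin n,
          (∏ s, prob (ξ s)) * (f (traj ξ t) - f xstar) := hA2
    _ ≤ ((T:ℝ)+1)⁻¹ * ((1/η) * ((1/2) * normHsq H (xstar - x0)
          + ((T:ℝ)+1) * (η^2/2 * (c1 * α * entry1Norm (R * F))^2))) :=
        mul_le_mul_of_nonneg_left hB2 (by positivity)
    _ = normHsq H (xstar - x0) / (2 * η * ((T:ℝ) + 1))
        + (η / 2) * (c1 * α * entry1Norm (R * F)) ^ 2 := hKey
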